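/- Let Γ = (V,E) be a reduced finite simple graph. Then the map γ : Aut^π(Γ) → Sym(V) uniquely determined by π(N(v)) = N(γ(π)(v)) for all v ∈ V satisfies: γ(Aut^π(Γ)) = Aut^π(Γ); γ is a group automorphism of Aut^π(Γ); γ ∘ γ is the identity; the set of fixed points of γ equals Aut(Γ); and for every π ∈ Aut^π(Γ) and all v,w ∈ V one has (v,w) ∈ E if and only if (π(v),γ(π)(w)) ∈ E. -/

import Mathlib

open SimpleGraph

/-- A graph is reduced (vertex determining) if distinct vertices have distinct
open neighborhoods. -/
def Reduced {V : Type*} (G : SimpleGraph V) : Prop :=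
  ∀ u v : V, G.neighborSet u = G.neighborSet v → u = v

/-- The group of two-fold projections of a graph: permutations mapping every
open neighborhood onto some open neighborhood. -/
def autPi {V : Type*} [Fintype V] (G : SimpleGraph V) : Subgroup (Equiv.Perm V) where
  carrier := {π : Equiv.Perm V | ∀ v : V, ∃ w : V, π '' G.neighborSet v = G.neighborSet w}
  one_mem' := by
    intro v
    exact ⟨v, by simp⟩
  mul_mem' := by
    intro a b ha hb v
    obtain ⟨w, hw⟩ := hb v
    obtain ⟨u, hu⟩ := ha w
    refine ⟨u, ?_⟩
    rw [Equiv.Perm.coe_mul, Set.image_comp, hw, hu]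
  inv_mem' := by
    intro a ha v
    have hfin : (Set.range G.neighborSet).Finite := Set.finite_range _
    have hmaps : Set.MapsTo (Set.image ⇑a) (Set.range G.neighborSet)
        (Set.range G.neighborSet) := by
      rintro s ⟨u, rfl⟩
      obtain ⟨w, hw⟩ := ha u
      exact ⟨w, hw.symm⟩
    have hinj : Set.InjOn (Set.image ⇑a) (Set.range G.neighborSet) :=
      (Set.image_injective.mpr a.injective).injOn
    have hbij := (hfin.injOn_iff_bijOn_of_mapsTo hmaps).mp hinj
    obtain ⟨s, hs, hsv⟩ := hbij.surjOn ⟨v, rfl⟩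
    obtain ⟨w, rfl⟩ := hs
    refine ⟨w, ?_⟩
    have : (⇑a⁻¹) '' ((⇑a) '' G.neighborSet w) = G.neighborSet w := by
      rw [← Set.image_comp]
      simp
    rw [← this, hsv]

/-- The automorphism group of a graph, as a subgroup of the permutations of its vertices. -/
def autG {V : Type*} [Fintype V] (G : SimpleGraph V) : Subgroup (Equiv.Perm V) where
  carrier := {π : Equiv.Perm V | ∀ v w : V, G.Adj (π v) (π w) ↔ G.Adj v w}
  one_mem' := by intro v w; rfl
  mul_mem' := by
    intro a b ha hb v w
    rw [Equiv.Perm.coe_mul, Function.comp_apply, Function.comp_apply, ha, hb]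
  inv_mem' := by
    intro a ha v w
    conv_rhs => rw [← Equiv.apply_symm_apply a v, ← Equiv.apply_symm_apply a w]
    rw [ha]
    rfl

/-- For a reduced finite simple graph Γ, the map γ on Aut^π(Γ) determined by
π(N(v)) = N(γ(π)(v)) maps Aut^π(Γ) onto itself, is an injective group homomorphism
(hence an automorphism of Aut^π(Γ)), is an involution, its fixed points are exactly
the automorphisms of Γ, and (v,w) ∈ E ↔ (π(v), γ(π)(w)) ∈ E. -/
theorem stmt_1 {V : Type*} [Fintype V] (G : SimpleGraph V) (hred : Reduced G)
    (γ : autPi G → Equiv.Perm V)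
    (hγ : ∀ (π : autPi G) (v : V),
      (π : Equiv.Perm V) '' G.neighborSet v = G.neighborSet (γ π v)) :
    Set.range γ = (autPi G : Set (Equiv.Perm V)) ∧
    (∀ π₁ π₂ : autPi G, γ (π₁ * π₂) = γ π₁ * γ π₂) ∧
    Function.Injective γ ∧
    (∀ π₁ π₂ : autPi G, γ π₁ = (π₂ : Equiv.Perm V) → γ π₂ = (π₁ : Equiv.Perm V)) ∧
    (∀ π : autPi G, γ π = (π : Equiv.Perm V) ↔ (π : Equiv.Perm V) ∈ autG G) ∧
    (∀ (π : autPi G) (v w : V), G.Adj v w ↔ G.Adj ((π : Equiv.Perm V) v) (γ π w)) := by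

  have hadj : ∀ (π : autPi G) (v w : V), G.Adj v w ↔ G.Adj ((π : Equiv.Perm V) v) (γ π w) := by
    intro π v w
    constructor
    · intro h1
      have hm : (π : Equiv.Perm V) v ∈ G.neighborSet (γ π w) := by
        rw [← hγ π w]
        exact ⟨v, h1.symm, rfl⟩
      exact hm.symm
    · intro h1
      have hm : (π : Equiv.Perm V) v ∈ (π : Equiv.Perm V) '' G.neighborSet w := by
        rw [hγ π w]
        exact h1.symm
      obtain ⟨x, hx, hxe⟩ := hm
      have hxv := (π : Equiv.Perm V).injective hxe
      subst hxv
      exact hx.symm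
  have himg : ∀ (π : autPi G) (v : V),
      (γ π) '' G.neighborSet v = G.neighborSet ((π : Equiv.Perm V) v) := by
    intro π v
    ext y
    simp only [Set.mem_image, SimpleGraph.mem_neighborSet]
    constructor
    · rintro ⟨x, hx, rfl⟩
      exact (hadj π v x).mp hx
    · intro hy
      refine ⟨(γ π).symm y, ?_, (γ π).apply_symm_apply y⟩
      have h2 := (hadj π v ((γ π).symm y)).mpr
      rw [(γ π).apply_symm_apply] at h2
      exact h2 hy
  have hmem : ∀ π : autPi G, γ π ∈ autPi G :=
    fun π v => ⟨(π : Equiv.Perm V) v, himg π v⟩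
  have hinv : ∀ π : autPi G, γ (⟨γ π, hmem π⟩ : autPi G) = (π : Equiv.Perm V) := by
    intro π
    ext v
    apply hred
    rw [← hγ (⟨γ π, hmem π⟩ : autPi G) v]
    exact himg π v
  have hmul : ∀ π₁ π₂ : autPi G, γ (π₁ * π₂) = γ π₁ * γ π₂ := by
    intro π₁ π₂
    ext v
    apply hred
    rw [← hγ (π₁ * π₂) v]
    have h3 : ((π₁ * π₂ : autPi G) : Equiv.Perm V) '' G.neighborSet v
        = (π₁ : Equiv.Perm V) '' ((π₂ : Equiv.Perm V) '' G.neighborSet v) := by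
      rw [← Set.image_comp]; rfl
    rw [h3, hγ π₂ v, hγ π₁ (γ π₂ v)]
    rfl
  have hinj : Function.Injective γ := by
    intro π₁ π₂ h
    have h1 := hinv π₁
    have h2 := hinv π₂
    have he : (⟨γ π₁, hmem π₁⟩ : autPi G) = ⟨γ π₂, hmem π₂⟩ := Subtype.ext h
    rw [he, h2] at h1
    exact Subtype.ext h1.symm
  refine ⟨?_, hmul, hinj, ?_, ?_, hadj⟩
  · ext σ
    constructor
    · rintro ⟨π, rfl⟩
      exact hmem π
    · intro hσ
      exact ⟨⟨γ ⟨σ, hσ⟩, hmem _⟩, hinv ⟨σ, hσ⟩⟩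
  · intro π₁ π₂ h
    have he : π₂ = (⟨γ π₁, hmem π₁⟩ : autPi G) := Subtype.ext h.symm
    rw [he]
    exact hinv π₁
  · intro π
    constructor
    · intro h v w
      have := hadj π v w
      rw [h] at this
      exact this.symm
    · intro h
      ext v
      apply hred
      rw [← hγ π v]
      ext y
      simp only [Set.mem_image, SimpleGraph.mem_neighborSet]
      constructor
      · rintro ⟨x, hx, rfl⟩
        exact (h v x).mpr hx
      · intro hy
        refine ⟨(π : Equiv.Perm V).symm y, ?_, (π : Equiv.Perm V).apply_symm_apply y⟩
        have h2 := (h v ((π : Equiv.Perm V).symm y)).mp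
        rw [(π : Equiv.Perm V).apply_symm_apply] at h2
        exact h2 hy
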